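/- Let G = π₁(Γ) be the fundamental group of a finite graph of groups Γ, and suppose G is finitely generated. Then for every vertex v of Γ, the vertex group G_v is finitely generated relative to the images in G_v of the edge groups of the edges incident to v: there is a finite subset F ⊆ G_v such that F together with these edge-group images generates G_v. -/

import Mathlib

namespace Stmt12

open SimpleGraph MulAction

variable {V G : Type*} [Group G] [MulAction G V]

/-- Oriented edges of `X` whose source lies in the orbit of `v`. -/
def Ed (G : Type*) [Group G] [MulAction G V] (X : SimpleGraph V) (v : V) : Type _ :=
  {p : V × V // X.Adj p.1 p.2 ∧ p.1 ∈ MulAction.orbit G v}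

/-- Choice of a normalized representative (based at `v`) for every `G`-orbit of
oriented edges with source in the orbit of `v`, together with the translating elements. -/
theorem exists_sigma (X : SimpleGraph V) (v : V)
    (hact : ∀ (g : G) (u w : V), X.Adj u w → X.Adj (g • u) (g • w)) :
    ∃ (σ : Ed G X v → G) (ν : Ed G X v → V),
      (∀ e, X.Adj v (ν e)) ∧ (∀ e : Ed G X v, σ e • ((v, ν e) : V × V) = e.val) ∧
      (∀ e e' : Ed G X v, (∃ g : G, g • e.val = e'.val) → ν e = ν e') := by
  classical
  letI s : Setoid (Ed G X v) :=
    ⟨fun e e' => ∃ g : G, g • e.val = e'.val, by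
      constructor
      · exact fun e => ⟨1, one_smul _ _⟩
      · rintro e e' ⟨g, hg⟩; exact ⟨g⁻¹, by rw [← hg, inv_smul_smul]⟩
      · rintro e e' e'' ⟨g, hg⟩ ⟨g', hg'⟩; exact ⟨g' * g, by rw [mul_smul, hg, hg']⟩⟩
  -- for each class, a base element of G moving v to the source of the out-rep
  have hout : ∀ q : Quotient s, ∃ c : G, c • v = (q.out).val.1 := fun q => by
    have := (q.out).prop.2
    rwa [MulAction.mem_orbit_iff] at this
  choose c hc using hout
  -- normalized second endpoint
  set ν₀ : Quotient s → V := fun q => (c q)⁻¹ • (q.out).val.2 with hν₀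
  have hrep : ∀ q : Quotient s, c q • ((v, ν₀ q) : V × V) = (q.out).val := by
    intro q
    have : c q • ((v, ν₀ q) : V × V) = (c q • v, c q • (c q)⁻¹ • (q.out).val.2) := rfl
    rw [this, hc, smul_inv_smul]
  have hmk : ∀ e : Ed G X v, ∃ g : G, g • ((v, ν₀ ⟦e⟧) : V × V) = e.val := by
    intro e
    obtain ⟨g, hg⟩ := Quotient.mk_out (s := s) e
    exact ⟨g * c ⟦e⟧, by rw [mul_smul, hrep, hg]⟩
  choose σ hσ using hmk
  refine ⟨σ, fun e => ν₀ ⟦e⟧, ?_, hσ, ?_⟩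
  · intro e
    have h1 : X.Adj ((⟦e⟧ : Quotient s).out).val.1 ((⟦e⟧ : Quotient s).out).val.2 :=
      ((⟦e⟧ : Quotient s).out).prop.1
    have h2 := hact (c ⟦e⟧)⁻¹ _ _ h1
    have h3 : (c ⟦e⟧)⁻¹ • ((⟦e⟧ : Quotient s).out).val.1 = v := by
      rw [inv_smul_eq_iff, hc]
    show X.Adj v (ν₀ ⟦e⟧)
    simp only [hν₀]
    rw [h3] at h2
    exact h2
  · intro e e' hrel
    have h4 : (⟦e⟧ : Quotient s) = ⟦e'⟧ := Quotient.sound hrel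
    show ν₀ ⟦e⟧ = ν₀ ⟦e'⟧
    rw [h4]


section Blowup

variable (X : SimpleGraph V) (v : V)

/-- Vertices of the blown-up graph: cosets of `K` over the orbit of `v`,
other vertices unchanged. -/
def WV (G : Type*) [Group G] [MulAction G V] (v : V) (K : Subgroup G) : Type _ :=
  (G ⧸ K) ⊕ {x : V // x ∉ MulAction.orbit G v}

variable {K : Subgroup G}

/-- Projection of a coset to a vertex (choice-based; behaves well when `K ≤ stab v`). -/
noncomputable def pil (v : V) (K : Subgroup G) (c : G ⧸ K) : V :=
  (Classical.choose (QuotientGroup.mk_surjective c)) • v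

/-- Projection from blown-up vertices to `V`. -/
noncomputable def ppi (v : V) (K : Subgroup G) : WV G v K → V :=
  Sum.elim (pil v K) (fun x => x.val)

lemma pil_mk (hKv : ∀ k ∈ K, k • v = v) (g : G) :
    pil v K (QuotientGroup.mk g) = g • v := by
  have hspec := Classical.choose_spec
    (QuotientGroup.mk_surjective (QuotientGroup.mk g : G ⧸ K))
  have : (Classical.choose (QuotientGroup.mk_surjective (QuotientGroup.mk g : G ⧸ K)))⁻¹ * g ∈ K :=
    QuotientGroup.eq.mp hspec
  have h2 := hKv _ this
  rw [mul_smul] at h2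
  have := congrArg (fun y => Classical.choose
    (QuotientGroup.mk_surjective (QuotientGroup.mk g : G ⧸ K)) • y) h2
  simpa [smul_inv_smul, pil] using this.symm

lemma pil_mem_orbit (c : G ⧸ K) : pil v K c ∈ MulAction.orbit G v :=
  ⟨Classical.choose (QuotientGroup.mk_surjective c), rfl⟩

variable (σ : Ed G X v → G)

/-- `Att c x` : the oriented edge from `pil c` to `x` is attached to the coset `c`. -/
def Att (K : Subgroup G) (c : G ⧸ K) (x : V) : Prop :=
  ∃ g : G, (QuotientGroup.mk g : G ⧸ K) = c ∧
    ∃ h1 : X.Adj (g • v) x,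
      (QuotientGroup.mk (σ ⟨(g • v, x), h1, ⟨g, rfl⟩⟩) : G ⧸ K) = c

/-- Adjacency relation on the blown-up vertex set. -/
def WAdj (K : Subgroup G) : WV G v K → WV G v K → Prop
  | Sum.inl c, Sum.inl c' => Att X v σ K c (pil v K c') ∧ Att X v σ K c' (pil v K c)
  | Sum.inl c, Sum.inr x => Att X v σ K c x.val
  | Sum.inr x, Sum.inl c => Att X v σ K c x.val
  | Sum.inr x, Sum.inr x' => X.Adj x.val x'.val

/-- The blown-up graph. -/
def W (K : Subgroup G) : SimpleGraph (WV G v K) := SimpleGraph.fromRel (WAdj X v σ K)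

lemma wadj_symm {z z' : WV G v K} (h : WAdj X v σ K z z') : WAdj X v σ K z' z := by
  cases z <;> cases z' <;> simp only [WAdj] at h ⊢
  · exact ⟨h.2, h.1⟩
  · exact h
  · exact h
  · exact h.symm

lemma att_proj (hKv : ∀ k ∈ K, k • v = v) {c : G ⧸ K} {x : V}
    (h : Att X v σ K c x) : X.Adj (pil v K c) x := by
  obtain ⟨g, hg, h1, -⟩ := h
  rw [← hg, pil_mk (v := v) (K := K) hKv g]
  exact h1

lemma wadj_proj (hKv : ∀ k ∈ K, k • v = v) {z z' : WV G v K}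
    (h : WAdj X v σ K z z') : X.Adj (ppi v K z) (ppi v K z') := by
  cases z <;> cases z' <;> simp only [WAdj] at h <;> simp only [ppi, Sum.elim_inl, Sum.elim_inr]
  · exact att_proj X v σ hKv h.1
  · exact att_proj X v σ hKv h
  · exact (att_proj X v σ hKv h).symm
  · exact h

lemma adj_of_wadj (hKv : ∀ k ∈ K, k • v = v) {z z' : WV G v K}
    (h : WAdj X v σ K z z') : (W X v σ K).Adj z z' := by
  refine ⟨fun hzz => ?_, Or.inl h⟩
  subst hzz
  exact (X.loopless.irrefl _) (wadj_proj X v σ hKv h)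

lemma wadj_of_adj {z z' : WV G v K} (h : (W X v σ K).Adj z z') : WAdj X v σ K z z' :=
  h.2.elim id (wadj_symm X v σ)

lemma adj_proj (hKv : ∀ k ∈ K, k • v = v) {z z' : WV G v K}
    (h : (W X v σ K).Adj z z') : X.Adj (ppi v K z) (ppi v K z') :=
  wadj_proj X v σ hKv (wadj_of_adj X v σ h)

lemma sigma_congr {σ : Ed G X v → G} (e e' : Ed G X v) (h : e.val = e'.val) : σ e = σ e' := by
  cases e; cases e'; cases h; rfl

lemma att_unique (hKv : ∀ k ∈ K, k • v = v) {c c' : G ⧸ K} {x : V}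
    (h : Att X v σ K c x) (h' : Att X v σ K c' x) (hpil : pil v K c = pil v K c') :
    c = c' := by
  obtain ⟨g, hg, h1, hatt⟩ := h
  obtain ⟨g', hg', h1', hatt'⟩ := h'
  have hgv : g • v = g' • v := by
    have e1 : pil v K c = g • v := by rw [← hg, pil_mk (v := v) (K := K) hKv g]
    have e2 : pil v K c' = g' • v := by rw [← hg', pil_mk (v := v) (K := K) hKv g']
    rw [← e1, ← e2, hpil]
  have hσ : σ ⟨(g • v, x), h1, ⟨g, rfl⟩⟩ = σ ⟨(g' • v, x), h1', ⟨g', rfl⟩⟩ :=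
    sigma_congr X v _ _ (by show ((g • v, x) : V × V) = (g' • v, x); rw [hgv])
  rw [← hatt, ← hatt', hσ]

lemma wadj_att {c : G ⧸ K} {z : WV G v K} (h : WAdj X v σ K (Sum.inl c) z) :
    Att X v σ K c (ppi v K z) := by
  cases z with
  | inl c' => exact h.1
  | inr x => exact h

/-- Uniqueness of lifts of edges: two edges of the blow-up over the same oriented
edge of `X` have the same source. -/
lemma edge_unique (hKv : ∀ k ∈ K, k • v = v) {z z₁ z' z₁' : WV G v K}
    (h : (W X v σ K).Adj z z₁) (h' : (W X v σ K).Adj z' z₁')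
    (e0 : ppi v K z = ppi v K z') (e1 : ppi v K z₁ = ppi v K z₁') : z = z' := by
  have hw := wadj_of_adj X v σ h
  have hw' := wadj_of_adj X v σ h'
  cases z with
  | inl c =>
    cases z' with
    | inl c' =>
      have a1 := wadj_att X v σ hw
      have a2 := wadj_att X v σ hw'
      rw [← e1] at a2
      exact congrArg Sum.inl (att_unique X v σ hKv a1 a2 e0)
    | inr x =>
      exfalso
      have : ppi v K (Sum.inl c) ∈ MulAction.orbit G v := pil_mem_orbit v c
      rw [e0] at this
      exact x.prop this
  | inr x =>
    cases z' with
    | inl c' =>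
      exfalso
      have : ppi v K (Sum.inl c') ∈ MulAction.orbit G v := pil_mem_orbit v c'
      rw [← e0] at this
      exact x.prop this
    | inr x' => exact congrArg Sum.inr (Subtype.ext e0)

/-- Translation of blown-up vertices by a group element. -/
def act (hact : ∀ (g : G) (u w : V), X.Adj u w → X.Adj (g • u) (g • w)) (g : G) :
    WV G v K → WV G v K :=
  Sum.map (fun c => g • c) (fun x => ⟨g • x.val, fun hx => by
    have : x.val ∈ MulAction.orbit G v := by
      obtain ⟨g', hg'⟩ := hx
      have hg2 : g' • v = g • x.val := hg'
      exact ⟨g⁻¹ * g', show (g⁻¹ * g') • v = x.val by rw [mul_smul, hg2, inv_smul_smul]⟩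
    exact x.prop this⟩)

lemma act_ppi (hact : ∀ (g : G) (u w : V), X.Adj u w → X.Adj (g • u) (g • w))
    (hKv : ∀ k ∈ K, k • v = v) (g : G) (z : WV G v K) :
    ppi v K (act X v hact g z) = g • ppi v K z := by
  cases z with
  | inl c =>
    induction c using Quotient.inductionOn' with
    | h a =>
      show pil v K (g • QuotientGroup.mk a) = g • pil v K (QuotientGroup.mk a)
      have : g • (QuotientGroup.mk a : G ⧸ K) = QuotientGroup.mk (g * a) := rfl
      rw [this, pil_mk (v := v) (K := K) hKv, pil_mk (v := v) (K := K) hKv, mul_smul]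
  | inr x => rfl

lemma att_smul
    (hact : ∀ (g : G) (u w : V), X.Adj u w → X.Adj (g • u) (g • w))
    (ν : Ed G X v → V)
    (hνadj : ∀ e, X.Adj v (ν e))
    (hσν : ∀ e : Ed G X v, σ e • ((v, ν e) : V × V) = e.val)
    (hν : ∀ e e' : Ed G X v, (∃ g : G, g • e.val = e'.val) → ν e = ν e')
    (hKE : ∀ w : V, X.Adj v w → ∀ k : G,
      k ∈ MulAction.stabilizer G v ⊓ MulAction.stabilizer G w → k ∈ K)
    (g : G) {c : G ⧸ K} {x : V} (h : Att X v σ K c x) :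
    Att X v σ K (g • c) (g • x) := by
  obtain ⟨g₀, hg₀, h1, hatt⟩ := h
  have h1' : X.Adj ((g * g₀) • v) (g • x) := by
    rw [mul_smul]; exact hact g _ _ h1
  refine ⟨g * g₀, by rw [← hg₀]; rfl, h1', ?_⟩
  set e : Ed G X v := ⟨(g₀ • v, x), h1, ⟨g₀, rfl⟩⟩ with he
  set e' : Ed G X v := ⟨((g * g₀) • v, g • x), h1', ⟨g * g₀, rfl⟩⟩ with he'
  have hee' : (g : G) • e.val = e'.val := by
    show g • ((g₀ • v, x) : V × V) = ((g * g₀) • v, g • x)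
    rw [Prod.smul_mk, mul_smul]
  have hνe : ν e = ν e' := hν e e' ⟨g, hee'⟩
  have hk : ((σ e')⁻¹ * (g * σ e)) • ((v, ν e) : V × V) = ((v, ν e) : V × V) := by
    rw [mul_smul, mul_smul, hσν e, hee', ← hσν e', inv_smul_smul, hνe]
  have hk1 : ((σ e')⁻¹ * (g * σ e)) • v = v := congrArg Prod.fst hk
  have hk2 : ((σ e')⁻¹ * (g * σ e)) • (ν e) = ν e := congrArg Prod.snd hk
  have hkK : (σ e')⁻¹ * (g * σ e) ∈ K :=
    hKE (ν e) (hνadj e) _ ⟨hk1, hk2⟩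
  have : (QuotientGroup.mk (σ e') : G ⧸ K) = QuotientGroup.mk (g * σ e) :=
    QuotientGroup.eq.mpr hkK
  rw [this]
  show (QuotientGroup.mk (g * σ e) : G ⧸ K) = g • c
  rw [← hatt]
  rfl

lemma act_adj
    (hact : ∀ (g : G) (u w : V), X.Adj u w → X.Adj (g • u) (g • w))
    (ν : Ed G X v → V)
    (hνadj : ∀ e, X.Adj v (ν e))
    (hσν : ∀ e : Ed G X v, σ e • ((v, ν e) : V × V) = e.val)
    (hν : ∀ e e' : Ed G X v, (∃ g : G, g • e.val = e'.val) → ν e = ν e')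
    (hKv : ∀ k ∈ K, k • v = v)
    (hKE : ∀ w : V, X.Adj v w → ∀ k : G,
      k ∈ MulAction.stabilizer G v ⊓ MulAction.stabilizer G w → k ∈ K)
    (g : G) {z z' : WV G v K} (h : (W X v σ K).Adj z z') :
    (W X v σ K).Adj (act X v hact g z) (act X v hact g z') := by
  have hw := wadj_of_adj X v σ h
  refine adj_of_wadj X v σ hKv ?_
  cases z with
  | inl c =>
    cases z' with
    | inl c' =>
      obtain ⟨a1, a2⟩ := hw
      constructor
      · have := att_smul X v σ hact ν hνadj hσν hν hKE g a1
        show Att X v σ K (g • c) (pil v K (g • c'))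
        have hp : pil v K (g • c') = g • pil v K c' :=
          act_ppi X v hact hKv g (Sum.inl c')
        rw [hp]; exact this
      · have := att_smul X v σ hact ν hνadj hσν hν hKE g a2
        show Att X v σ K (g • c') (pil v K (g • c))
        have hp : pil v K (g • c) = g • pil v K c :=
          act_ppi X v hact hKv g (Sum.inl c)
        rw [hp]; exact this
    | inr x => exact att_smul X v σ hact ν hνadj hσν hν hKE g hw
  | inr x =>
    cases z' with
    | inl c => exact att_smul X v σ hact ν hνadj hσν hν hKE g hw
    | inr x' => exact hact g _ _ hw

end Blowup

/-- In a tree, two neighbors of `x` joined by a walk avoiding `x` coincide. -/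
lemma branch {X : SimpleGraph V} (htree : X.IsTree) {x w w' : V}
    (hw : X.Adj x w) (hw' : X.Adj x w') (q : X.Walk w w')
    (hx : ∀ s ∈ q.support, s ≠ x) : w = w' := by
  classical
  by_contra hne
  have hP2 : (SimpleGraph.Walk.cons hw.symm (SimpleGraph.Walk.cons hw' SimpleGraph.Walk.nil)
      : X.Walk w w').IsPath := by
    rw [SimpleGraph.Walk.cons_isPath_iff]
    constructor
    · rw [SimpleGraph.Walk.cons_isPath_iff]
      exact ⟨SimpleGraph.Walk.IsPath.nil, by simp [hw'.ne]⟩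
    · simp [hw.ne', hne]
  have := htree.IsAcyclic.path_unique ⟨q.bypass, q.bypass_isPath⟩ ⟨_, hP2⟩
  have hxs : x ∈ q.bypass.support := by
    rw [show q.bypass = (SimpleGraph.Walk.cons hw.symm
      (SimpleGraph.Walk.cons hw' SimpleGraph.Walk.nil) : X.Walk w w') from congrArg Subtype.val this]
    simp
  exact hx x (q.support_bypass_subset hxs) rfl

section Blowup2

variable (X : SimpleGraph V) (v : V) (σ : Ed G X v → G) {K : Subgroup G}

/-- First moment a walk in the blow-up hits the fiber over `x`. -/
lemma firstHit {x : V} :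
    ∀ {a b : WV G v K} (q : (W X v σ K).Walk a b), ppi v K b = x → ppi v K a ≠ x →
    ∃ (y y' : WV G v K) (q₁ : (W X v σ K).Walk a y),
      (W X v σ K).Adj y y' ∧ ppi v K y' = x ∧
      (∀ s ∈ q₁.support, ppi v K s ≠ x) ∧ y' ∈ q.support := by
  intro a b q
  induction q with
  | nil => intro hb ha; exact absurd hb ha
  | @cons a d b h q' ih =>
    intro hb ha
    by_cases hd : ppi v K d = x
    · refine ⟨a, d, SimpleGraph.Walk.nil, h, hd, ?_, ?_⟩
      · intro s hs
        simp only [SimpleGraph.Walk.support_nil, List.mem_singleton] at hs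
        rw [hs]; exact ha
      · rw [SimpleGraph.Walk.support_cons]
        right
        exact SimpleGraph.Walk.start_mem_support q'
    · obtain ⟨y, y', q₁, e, h1, h2, h3⟩ := ih hb hd
      refine ⟨y, y', SimpleGraph.Walk.cons h q₁, e, h1, ?_, ?_⟩
      · intro s hs
        rw [SimpleGraph.Walk.support_cons, List.mem_cons] at hs
        rcases hs with rfl | hs
        · exact ha
        · exact h2 s hs
      · rw [SimpleGraph.Walk.support_cons]
        right
        exact h3

/-- Key rigidity: a path in the blow-up whose endpoints have the same projection
is constant. -/
lemma fiber_inj (htree : X.IsTree) (hKv : ∀ k ∈ K, k • v = v)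
    {z z' : WV G v K} (p : (W X v σ K).Walk z z') (hp : p.IsPath)
    (hπ : ppi v K z = ppi v K z') : z = z' := by
  cases p with
  | nil => rfl
  | @cons z z₁ z' e p' =>
    exfalso
    rw [SimpleGraph.Walk.cons_isPath_iff] at hp
    have hz₁ : ppi v K z₁ ≠ ppi v K z := (adj_proj X v σ hKv e).symm.ne
    obtain ⟨y, y', q₁, e', hy', hq₁, hy'in⟩ :=
      firstHit X v σ (x := ppi v K z) p' hπ.symm hz₁
    -- project q₁ to X
    have hyadj : X.Adj (ppi v K z) (ppi v K y) := by
      have := (adj_proj X v σ hKv e').symm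
      rw [hy'] at this
      exact this
    have hzadj : X.Adj (ppi v K z) (ppi v K z₁) := adj_proj X v σ hKv e
    have heq : ppi v K z₁ = ppi v K y := by
      refine branch htree hzadj hyadj
        (q₁.map ⟨ppi v K, fun hadj => adj_proj X v σ hKv hadj⟩) ?_
      intro s hs
      rw [SimpleGraph.Walk.support_map] at hs
      obtain ⟨t, ht, rfl⟩ := List.mem_map.mp hs
      exact hq₁ t ht
    have : z = y' := edge_unique X v σ hKv e e'.symm hy'.symm heq
    rw [this] at hp
    exact hp.2 hy'in

end Blowup2

section Lift

variable (X : SimpleGraph V) (v : V) (σ : Ed G X v → G)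

/-- The attachment element of the first edge of a walk into `v`. -/
def entry : ∀ {u : V}, X.Walk u v → u ∈ MulAction.orbit G v → G
  | _, SimpleGraph.Walk.nil, _ => 1
  | _, SimpleGraph.Walk.cons h _, hu => σ ⟨(_, _), h, hu⟩

lemma sigma_fst (ν : Ed G X v → V)
    (hσν : ∀ e : Ed G X v, σ e • ((v, ν e) : V × V) = e.val) (e : Ed G X v) :
    σ e • v = e.val.1 := congrArg Prod.fst (hσν e)

lemma entry_smul (ν : Ed G X v → V)
    (hσν : ∀ e : Ed G X v, σ e • ((v, ν e) : V × V) = e.val)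
    {u : V} (w : X.Walk u v) (hu : u ∈ MulAction.orbit G v) :
    entry X v σ w hu • v = u := by
  cases w with
  | nil => exact one_smul _ _
  | cons h w' => exact sigma_fst X v σ ν hσν _

/-- Main lifting lemma: every walk in the tree ending at `v` lifts to the blow-up
graph, provided `K` contains a suitable finite set of mismatch elements. -/
lemma lift_walk
    (hact : ∀ (g : G) (u w : V), X.Adj u w → X.Adj (g • u) (g • w))
    (ν : Ed G X v → V)
    (hνadj : ∀ e, X.Adj v (ν e))
    (hσν : ∀ e : Ed G X v, σ e • ((v, ν e) : V × V) = e.val) :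
    ∀ (n : ℕ) {u : V} (w : X.Walk u v), w.length = n →
    ∃ Sw : Finset G, (∀ s ∈ Sw, s • v = v) ∧
      ∀ (K : Subgroup G), (∀ k ∈ K, k • v = v) →
        (∀ w' : V, X.Adj v w' → ∀ k : G,
          k ∈ MulAction.stabilizer G v ⊓ MulAction.stabilizer G w' → k ∈ K) →
        (∀ s ∈ Sw, s ∈ K) →
        ((∀ hu : u ∉ MulAction.orbit G v,
            (W X v σ K).Reachable (Sum.inr ⟨u, hu⟩) (Sum.inl (QuotientGroup.mk (1 : G) : G ⧸ K)))
        ∧ (∀ (hu : u ∈ MulAction.orbit G v) (g : G), g • v = u →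
            g⁻¹ * entry X v σ w hu ∈ K →
            (W X v σ K).Reachable (Sum.inl (QuotientGroup.mk g : G ⧸ K)) (Sum.inl (QuotientGroup.mk (1 : G))))) := by
  classical
  intro n
  induction n using Nat.strong_induction_on with
  | _ n ih =>
  intro u w hn
  cases w with
  | nil =>
    refine ⟨∅, by simp, fun K hKv hKE hSK => ⟨?_, ?_⟩⟩
    · intro hu; exact absurd (MulAction.mem_orbit_self v) hu
    · intro hu g hg hcond
      have hone : entry X v σ (SimpleGraph.Walk.nil) hu = 1 := rfl
      rw [hone, mul_one] at hcond
      have : (QuotientGroup.mk g : G ⧸ K) = QuotientGroup.mk (1 : G) :=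
        QuotientGroup.eq.mpr (by simpa using (inv_mem_iff (x := g)).mp hcond)
      rw [this]; exact SimpleGraph.Reachable.refl _
  | @cons _ b _ h w' =>
    obtain ⟨S', hS'v, hS'⟩ := ih w'.length
      (by simp only [SimpleGraph.Walk.length_cons] at hn; omega) w' rfl
    by_cases hb : b ∈ MulAction.orbit G v
    · -- attachment element of the reversed first edge at b
      set c' : G := σ ⟨(b, u), h.symm, hb⟩ with hc'
      have hc'v : c' • v = b := by
        have := sigma_fst X v σ ν hσν ⟨(b, u), h.symm, hb⟩
        simpa [← hc'] using this
      set μ : G := c'⁻¹ * entry X v σ w' hb with hμ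
      have hμv : μ • v = v := by
        rw [hμ, mul_smul, entry_smul X v σ ν hσν w' hb, inv_smul_eq_iff, hc'v]
      refine ⟨insert μ S', ?_, fun K hKv hKE hSK => ?_⟩
      · intro s hs
        rcases Finset.mem_insert.mp hs with rfl | hs
        · exact hμv
        · exact hS'v s hs
      have hSK' : ∀ s ∈ S', s ∈ K := fun s hs => hSK s (Finset.mem_insert_of_mem hs)
      have hμK : μ ∈ K := hSK μ (Finset.mem_insert_self _ _)
      -- the target of the lifted edge and reachability from it
      have hreach : (W X v σ K).Reachable (Sum.inl (QuotientGroup.mk c' : G ⧸ K)) (Sum.inl (QuotientGroup.mk (1 : G))) :=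
        (hS' K hKv hKE hSK').2 hb c' hc'v hμK
      -- attachment of the edge (b,u) at its b-end
      have hattb : Att X v σ K (QuotientGroup.mk c') u := by
        refine ⟨c', rfl, by rw [hc'v]; exact h.symm, ?_⟩
        have : σ (⟨(c' • v, u), by rw [hc'v]; exact h.symm, ⟨c', rfl⟩⟩ : Ed G X v)
            = σ (⟨(b, u), h.symm, hb⟩ : Ed G X v) := by
          apply sigma_congr
          show ((c' • v, u) : V × V) = (b, u)
          rw [hc'v]
        rw [this]
      constructor
      · intro hu
        have hadj : (W X v σ K).Adj (Sum.inr ⟨u, hu⟩) (Sum.inl (QuotientGroup.mk c')) :=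
          adj_of_wadj X v σ hKv hattb
        exact hadj.reachable.trans hreach
      · intro hu g hg hcond
        have hattu : Att X v σ K (QuotientGroup.mk g) b := by
          refine ⟨g, rfl, by rw [hg]; exact h, ?_⟩
          have : σ (⟨(g • v, b), by rw [hg]; exact h, ⟨g, rfl⟩⟩ : Ed G X v)
              = σ (⟨(u, b), h, hu⟩ : Ed G X v) := by
            apply sigma_congr
            show ((g • v, b) : V × V) = (u, b)
            rw [hg]
          rw [this]
          exact (QuotientGroup.eq.mpr hcond).symm
        have hadj : (W X v σ K).Adj (Sum.inl (QuotientGroup.mk g : G ⧸ K))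
            (Sum.inl (QuotientGroup.mk c')) := by
          refine adj_of_wadj X v σ hKv ?_
          constructor
          · rw [pil_mk (v := v) (K := K) hKv c', hc'v]; exact hattu
          · rw [pil_mk (v := v) (K := K) hKv g, hg]; exact hattb
        exact hadj.reachable.trans hreach
    · -- b not in the orbit
      refine ⟨S', hS'v, fun K hKv hKE hSK => ?_⟩
      have hreach : (W X v σ K).Reachable (Sum.inr ⟨b, hb⟩) (Sum.inl (QuotientGroup.mk (1 : G))) :=
        (hS' K hKv hKE hSK).1 hb
      constructor
      · intro hu
        have hadj : (W X v σ K).Adj (Sum.inr ⟨u, hu⟩) (Sum.inr ⟨b, hb⟩) :=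
          adj_of_wadj X v σ hKv h
        exact hadj.reachable.trans hreach
      · intro hu g hg hcond
        have hattu : Att X v σ K (QuotientGroup.mk g) b := by
          refine ⟨g, rfl, by rw [hg]; exact h, ?_⟩
          have : σ (⟨(g • v, b), by rw [hg]; exact h, ⟨g, rfl⟩⟩ : Ed G X v)
              = σ (⟨(u, b), h, hu⟩ : Ed G X v) := by
            apply sigma_congr
            show ((g • v, b) : V × V) = (u, b)
            rw [hg]
          rw [this]
          exact (QuotientGroup.eq.mpr hcond).symm
        have hadj : (W X v σ K).Adj (Sum.inl (QuotientGroup.mk g : G ⧸ K)) (Sum.inr ⟨b, hb⟩) :=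
          adj_of_wadj X v σ hKv hattu
        exact hadj.reachable.trans hreach

end Lift

end Stmt12


/-- Bass–Serre formulation: if a finitely generated group G acts without
inversions and cofinitely on a simplicial tree X (finitely many orbits of vertices and of
edges), then each vertex stabilizer is generated by a finite set together with the
stabilizers of the incident edges. -/
theorem stmt_12 {V G : Type*} [Group G] [MulAction G V] (X : SimpleGraph V)
    (htree : X.IsTree)
    (hact : ∀ (g : G) (u v : V), X.Adj u v → X.Adj (g • u) (g • v))
    (hni : ∀ (g : G) (u v : V), X.Adj u v → ¬ (g • u = v ∧ g • v = u))
    (hfg : Group.FG G)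
    (hvfin : Finite (Quotient (MulAction.orbitRel G V)))
    (hefin : ∃ E₀ : Finset (V × V), ∀ u w : V, X.Adj u w →
      ∃ g : G, ∃ p ∈ E₀, (g • p.1 = u ∧ g • p.2 = w) ∨ (g • p.1 = w ∧ g • p.2 = u))
    (v : V) :
    ∃ S : Finset G, (↑S : Set G) ⊆ (MulAction.stabilizer G v : Set G) ∧
      Subgroup.closure ((↑S : Set G) ∪
          ⋃ w ∈ X.neighborSet v,
            ((MulAction.stabilizer G v ⊓ MulAction.stabilizer G w : Subgroup G) : Set G)) =
        MulAction.stabilizer G v := by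
  classical
  obtain ⟨σ, ν, hνadj, hσν, hν⟩ := Stmt12.exists_sigma X v hact
  obtain ⟨F, hFtop, hFfin⟩ := Group.fg_iff.mp hfg
  -- a walk from g • v to v for every g
  have hwalk : ∀ g : G, Nonempty (X.Walk (g • v) v) := fun g =>
    htree.isConnected.preconnected (g • v) v
  have wf : ∀ g : G, X.Walk (g • v) v := fun g => (hwalk g).some
  have hlift := fun g : G =>
    Stmt12.lift_walk X v σ hact ν hνadj hσν (wf g).length (wf g) rfl
  choose Sf hSfv hSf using hlift
  have horb : ∀ g : G, g • v ∈ MulAction.orbit G v := fun g => ⟨g, rfl⟩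
  set δ : G → G := fun g => g⁻¹ * Stmt12.entry X v σ (wf g) (horb g) with hδ
  have hδv : ∀ g, δ g • v = v := by
    intro g
    have he := Stmt12.entry_smul X v σ ν hσν (wf g) (horb g)
    show (g⁻¹ * Stmt12.entry X v σ (wf g) (horb g)) • v = v
    rw [mul_smul, he, inv_smul_eq_iff]
  set S : Finset G := hFfin.toFinset.biUnion (fun f => insert (δ f) (Sf f)) with hS
  set Eset : Set G := ⋃ w ∈ X.neighborSet v,
      ((MulAction.stabilizer G v ⊓ MulAction.stabilizer G w : Subgroup G) : Set G) with hEset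
  set K : Subgroup G := Subgroup.closure ((↑S : Set G) ∪ Eset) with hK
  have hSstab : (↑S : Set G) ⊆ (MulAction.stabilizer G v : Set G) := by
    intro s hs
    simp only [hS, Finset.coe_biUnion, Set.mem_iUnion, Finset.mem_coe,
      Finset.mem_insert] at hs
    obtain ⟨f, -, hf⟩ := hs
    rcases hf with rfl | hf
    · exact hδv f
    · exact hSfv f s hf
  have hEstab : Eset ⊆ (MulAction.stabilizer G v : Set G) := by
    intro k hk
    simp only [hEset, Set.mem_iUnion] at hk
    obtain ⟨w, -, hw⟩ := hk
    exact hw.1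
  have hKv : ∀ k ∈ K, k • v = v := by
    intro k hk
    have : K ≤ MulAction.stabilizer G v := by
      rw [hK]
      exact Subgroup.closure_le _ |>.mpr (Set.union_subset hSstab hEstab)
    exact this hk
  have hKE : ∀ w' : V, X.Adj v w' → ∀ k : G,
      k ∈ MulAction.stabilizer G v ⊓ MulAction.stabilizer G w' → k ∈ K := by
    intro w' hadj k hk
    apply Subgroup.subset_closure
    refine Or.inr ?_
    simp only [hEset, Set.mem_iUnion]
    exact ⟨w', hadj, hk⟩
  have hSK : ∀ s ∈ S, s ∈ K := fun s hs => Subgroup.subset_closure (Or.inl hs)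
  have hSfK : ∀ f ∈ F, (∀ s ∈ Sf f, s ∈ K) ∧ δ f ∈ K := by
    intro f hf
    constructor
    · intro s hs
      refine hSK s ?_
      rw [hS]
      exact Finset.mem_biUnion.mpr ⟨f, hFfin.mem_toFinset.mpr hf, Finset.mem_insert_of_mem hs⟩
    · refine hSK _ ?_
      rw [hS]
      exact Finset.mem_biUnion.mpr ⟨f, hFfin.mem_toFinset.mpr hf, Finset.mem_insert_self _ _⟩
  -- the translation homs
  set maphom : ∀ g : G, Stmt12.W X v σ K →g Stmt12.W X v σ K := fun g =>
    ⟨Stmt12.act X v hact g, fun {a b} h =>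
      Stmt12.act_adj X v σ hact ν hνadj hσν hν hKv hKE g h⟩ with hmaph
  have hmap_inl : ∀ g a : G, (maphom g) (Sum.inl (QuotientGroup.mk a : G ⧸ K))
      = Sum.inl (QuotientGroup.mk (g * a) : G ⧸ K) := fun g a => by rw [hmaph]; rfl
  -- reachability of every coset from the base
  have hreach : ∀ g : G, (Stmt12.W X v σ K).Reachable
      (Sum.inl (QuotientGroup.mk (1 : G) : G ⧸ K)) (Sum.inl (QuotientGroup.mk g)) := by
    intro g
    have hg : g ∈ Subgroup.closure F := by rw [hFtop]; trivial
    induction hg using Subgroup.closure_induction with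
    | mem f hf =>
      have := (hSf f K hKv hKE (hSfK f hf).1).2 (horb f) f rfl (hSfK f hf).2
      exact this.symm
    | one => exact SimpleGraph.Reachable.refl _
    | mul x y hx hy px py =>
      have q := py.map (maphom x)
      rw [hmap_inl, hmap_inl, mul_one] at q
      exact px.trans q
    | inv x hx px =>
      have q := px.map (maphom x⁻¹)
      rw [hmap_inl, hmap_inl, mul_one, inv_mul_cancel] at q
      exact q.symm
  -- conclusion
  refine ⟨S, hSstab, le_antisymm ?_ ?_⟩
  · exact Subgroup.closure_le _ |>.mpr (Set.union_subset hSstab hEstab)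
  · intro h hh
    obtain ⟨wlk⟩ := hreach h
    have hp := wlk.bypass_isPath
    have hppi : Stmt12.ppi v K (Sum.inl (QuotientGroup.mk (1 : G) : G ⧸ K))
        = Stmt12.ppi v K (Sum.inl (QuotientGroup.mk h)) := by
      show Stmt12.pil v K (QuotientGroup.mk (1:G)) = Stmt12.pil v K (QuotientGroup.mk h)
      rw [Stmt12.pil_mk (v := v) (K := K) hKv, Stmt12.pil_mk (v := v) (K := K) hKv,
        one_smul]
      exact (MulAction.mem_stabilizer_iff.mp hh).symm
    have := Stmt12.fiber_inj X v σ htree hKv wlk.bypass hp hppi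
    have hmk : (QuotientGroup.mk (1 : G) : G ⧸ K) = QuotientGroup.mk h :=
      Sum.inl.inj this
    have := QuotientGroup.eq.mp hmk
    simpa using this
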